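/- In the three-level normal hierarchical model, for each node index j, the marginal law of the weighted sum Σ_{k≠j} c_{jk} Z_{jk} (pushforward of the joint law under z ↦ Σ_{k≠j} c_{jk} z_{jk}) equals the Gaussian measure with mean m0·Σ_{k≠j} c_{jk} and variance (Σ_{k≠j} c_{jk})·(c0 + Σ_{k≠j} c_{jk})/c0 (equivalently, precision c0 / ((Σ_{k≠j} c_{jk})(c0 + Σ_{k≠j} c_{jk}))). -/

import Mathlib

open MeasureTheory ProbabilityTheory

noncomputable section

/-- Index type for unordered pairs `j < k` of nodes. -/
abbrev PairIdx (p : ℕ) := {q : Fin p × Fin p // q.1 < q.2}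

/-- Symmetric extension of a function defined on pairs `j < k`. -/
def symExt {p : ℕ} (z : PairIdx p → ℝ) (j k : Fin p) : ℝ :=
  if h : j < k then z ⟨(j, k), h⟩ else if h' : k < j then z ⟨(k, j), h'⟩ else 0

/-- The joint law of `(W, (Z_{jk})_{j<k}, (Y_1,…,Y_p))` in the three-level normal
hierarchical model: `W ~ N(m0, 1/c0)`; given `W = w`, the `Z_{jk}` are independent
`N(w, 1/c_{jk})`; given `Z = z` (extended symmetrically), the `Y_j` are independent
`N((c0 m0 + ∑_{k≠j} c_{jk} z_{jk})/(c0 + ∑_{k≠j} c_{jk}), 1/(c0 + ∑_{k≠j} c_{jk}))`. -/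
def normalHierJoint (p : ℕ) (m0 c0 : ℝ) (c : Fin p → Fin p → ℝ) :
    Measure (ℝ × (PairIdx p → ℝ) × (Fin p → ℝ)) :=
  (gaussianReal m0 (1 / c0).toNNReal).bind fun w =>
    (Measure.pi fun q : PairIdx p =>
        gaussianReal w (1 / c q.1.1 q.1.2).toNNReal).bind fun z =>
      (Measure.pi fun j : Fin p =>
          gaussianReal
            ((c0 * m0 + ∑ k ∈ Finset.univ.erase j, c j k * symExt z j k) /
              (c0 + ∑ k ∈ Finset.univ.erase j, c j k))
            (1 / (c0 + ∑ k ∈ Finset.univ.erase j, c j k)).toNNReal).map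
        fun y => (w, z, y)

open Real
open scoped ENNReal NNReal



lemma pdf_conv_pointwise (v₁ v₂ : ℝ≥0) (h₁ : v₁ ≠ 0) (h₂ : v₂ ≠ 0) (z x : ℝ) :
    gaussianPDFReal 0 v₁ x * gaussianPDFReal 0 v₂ (z - x)
      = gaussianPDFReal 0 (v₁ + v₂) z *
        gaussianPDFReal ((v₁ : ℝ) * z / ((v₁ : ℝ) + v₂)) (v₁ * v₂ / (v₁ + v₂)) x := by
  have ha : (0:ℝ) < v₁ := lt_of_le_of_ne v₁.coe_nonneg (by exact_mod_cast h₁.symm)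
  have hb : (0:ℝ) < v₂ := lt_of_le_of_ne v₂.coe_nonneg (by exact_mod_cast h₂.symm)
  have hab : (0:ℝ) < (v₁:ℝ) + v₂ := by linarith
  have hcast : ((v₁ * v₂ / (v₁ + v₂) : ℝ≥0) : ℝ) = (v₁:ℝ) * v₂ / ((v₁:ℝ) + v₂) := by
    push_cast; ring
  have hpi : (0:ℝ) < π := pi_pos
  unfold gaussianPDFReal
  push_cast [hcast]
  rw [mul_mul_mul_comm, ← Real.exp_add, mul_mul_mul_comm, ← Real.exp_add, ← mul_inv, ← mul_inv,
    ← Real.sqrt_mul (by positivity), ← Real.sqrt_mul (by positivity)]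
  have hc : 2 * π * (v₁:ℝ) * (2 * π * (v₂:ℝ))
      = 2 * π * ((v₁:ℝ) + v₂) * (2 * π * ((v₁:ℝ) * v₂ / ((v₁:ℝ) + v₂))) := by
    field_simp
  rw [hc]
  congr 1
  rw [Real.exp_eq_exp]
  field_simp
  ring

lemma lintegral_gaussianPDF_conv (v₁ v₂ : ℝ≥0) (h₁ : v₁ ≠ 0) (h₂ : v₂ ≠ 0) (z : ℝ) :
    ∫⁻ x, gaussianPDF 0 v₁ x * gaussianPDF 0 v₂ (z - x) = gaussianPDF 0 (v₁ + v₂) z := by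
  have hv' : v₁ * v₂ / (v₁ + v₂) ≠ 0 := by
    refine div_ne_zero (mul_ne_zero h₁ h₂) ?_
    simp [h₁]
  calc ∫⁻ x, gaussianPDF 0 v₁ x * gaussianPDF 0 v₂ (z - x)
      = ∫⁻ x, ENNReal.ofReal (gaussianPDFReal 0 (v₁ + v₂) z) *
          ENNReal.ofReal (gaussianPDFReal ((v₁ : ℝ) * z / ((v₁ : ℝ) + v₂))
            (v₁ * v₂ / (v₁ + v₂)) x) := by
        congr 1 with x
        rw [gaussianPDF, gaussianPDF, ← ENNReal.ofReal_mul (gaussianPDFReal_nonneg _ _ _),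
          pdf_conv_pointwise v₁ v₂ h₁ h₂ z x,
          ENNReal.ofReal_mul (gaussianPDFReal_nonneg _ _ _)]
    _ = gaussianPDF 0 (v₁ + v₂) z := by
        rw [lintegral_const_mul _ ((measurable_gaussianPDFReal _ _).ennreal_ofReal),
          lintegral_gaussianPDFReal_eq_one _ hv', mul_one, gaussianPDF]

lemma gaussianReal_conv_zero (v₁ v₂ : ℝ≥0) :
    ((gaussianReal 0 v₁).prod (gaussianReal 0 v₂)).map (fun p : ℝ × ℝ => p.1 + p.2)
      = gaussianReal 0 (v₁ + v₂) := by
  rcases eq_or_ne v₁ 0 with rfl | h₁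
  · rw [gaussianReal_zero_var, Measure.dirac_prod, Measure.map_map (by fun_prop) (by fun_prop)]
    simp [Function.comp_def]
  rcases eq_or_ne v₂ 0 with rfl | h₂
  · rw [gaussianReal_zero_var, Measure.prod_dirac, Measure.map_map (by fun_prop) (by fun_prop)]
    simp [Function.comp_def]
  have h12 : v₁ + v₂ ≠ 0 := by simp [h₁]
  ext s hs
  rw [Measure.map_apply (by fun_prop) hs, Measure.prod_apply (hs.preimage (by fun_prop)),
    gaussianReal_of_var_ne_zero 0 h₁, gaussianReal_of_var_ne_zero 0 h₂,
    gaussianReal_of_var_ne_zero 0 h12, withDensity_apply _ hs]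
  have hgm : Measurable (gaussianPDF (0:ℝ) v₂) := (measurable_gaussianPDFReal _ _).ennreal_ofReal
  have hfm : Measurable (gaussianPDF (0:ℝ) v₁) := (measurable_gaussianPDFReal _ _).ennreal_ofReal
  have hind : ∀ x : ℝ, (volume.withDensity (gaussianPDF 0 v₂))
      (Prod.mk x ⁻¹' ((fun p : ℝ × ℝ => p.1 + p.2) ⁻¹' s))
      = ∫⁻ z, s.indicator (fun _ => (1:ℝ≥0∞)) z * gaussianPDF 0 v₂ (z - x) := by
    intro x
    have hTm : MeasurableSet {y : ℝ | x + y ∈ s} := hs.preimage (by fun_prop)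
    have : (Prod.mk x ⁻¹' ((fun p : ℝ × ℝ => p.1 + p.2) ⁻¹' s)) = {y : ℝ | x + y ∈ s} := rfl
    rw [this, withDensity_apply _ hTm, ← lintegral_indicator hTm]
    have heq : ∀ y : ℝ, {y : ℝ | x + y ∈ s}.indicator (gaussianPDF 0 v₂) y
        = (fun y => s.indicator (fun _ => (1:ℝ≥0∞)) (x + y) * gaussianPDF 0 v₂ y) y := by
      intro y
      by_cases hy : x + y ∈ s <;> simp [Set.indicator, hy]
    rw [lintegral_congr heq]
    calc ∫⁻ y, s.indicator (fun _ => (1:ℝ≥0∞)) (x + y) * gaussianPDF 0 v₂ y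
        = ∫⁻ y, (fun w => s.indicator (fun _ => (1:ℝ≥0∞)) (x + w) * gaussianPDF 0 v₂ w) y := rfl
      _ = ∫⁻ z, s.indicator (fun _ => (1:ℝ≥0∞)) z * gaussianPDF 0 v₂ (z - x) := by
          rw [← lintegral_add_right_eq_self
            (fun z => s.indicator (fun _ => (1:ℝ≥0∞)) z * gaussianPDF 0 v₂ (z - x)) x]
          congr 1 with y
          simp [add_comm x y]
  rw [lintegral_congr hind]
  rw [lintegral_withDensity_eq_lintegral_mul _ hfm]
  · have hswap : ∫⁻ x, gaussianPDF 0 v₁ x *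
          ∫⁻ z, s.indicator (fun _ => (1:ℝ≥0∞)) z * gaussianPDF 0 v₂ (z - x)
        = ∫⁻ z, s.indicator (fun _ => (1:ℝ≥0∞)) z * ∫⁻ x, gaussianPDF 0 v₁ x *
            gaussianPDF 0 v₂ (z - x) := by
      have hmeas : Measurable fun q : ℝ × ℝ =>
          gaussianPDF 0 v₁ q.1 * (s.indicator (fun _ => (1:ℝ≥0∞)) q.2 *
            gaussianPDF 0 v₂ (q.2 - q.1)) := by
        refine (hfm.comp measurable_fst).mul (Measurable.mul ?_ ?_)
        · exact (measurable_const.indicator hs).comp measurable_snd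
        · exact hgm.comp (measurable_snd.sub measurable_fst)
      calc ∫⁻ x, gaussianPDF 0 v₁ x *
              ∫⁻ z, s.indicator (fun _ => (1:ℝ≥0∞)) z * gaussianPDF 0 v₂ (z - x)
          = ∫⁻ x, ∫⁻ z, gaussianPDF 0 v₁ x *
              (s.indicator (fun _ => (1:ℝ≥0∞)) z * gaussianPDF 0 v₂ (z - x)) := by
            congr 1 with x
            rw [lintegral_const_mul]
            exact (measurable_const.indicator hs).mul (hgm.comp (measurable_id.sub_const x))
        _ = ∫⁻ z, ∫⁻ x, gaussianPDF 0 v₁ x *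
              (s.indicator (fun _ => (1:ℝ≥0∞)) z * gaussianPDF 0 v₂ (z - x)) := by
            exact lintegral_lintegral_swap hmeas.aemeasurable
        _ = ∫⁻ z, s.indicator (fun _ => (1:ℝ≥0∞)) z * ∫⁻ x, gaussianPDF 0 v₁ x *
              gaussianPDF 0 v₂ (z - x) := by
            congr 1 with z
            rw [← lintegral_const_mul]
            · congr 1 with x; ring
            · exact hfm.mul (hgm.comp (measurable_const.sub measurable_id))
    simp only [Pi.mul_apply]
    rw [hswap]
    have : ∀ z, s.indicator (fun _ => (1:ℝ≥0∞)) z * (∫⁻ x, gaussianPDF 0 v₁ x *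
        gaussianPDF 0 v₂ (z - x)) = s.indicator (fun _ => (1:ℝ≥0∞)) z *
          gaussianPDF 0 (v₁ + v₂) z := by
      intro z
      rw [lintegral_gaussianPDF_conv v₁ v₂ h₁ h₂ z]
    rw [lintegral_congr this, ← lintegral_indicator hs]
    congr 1 with z
    by_cases hz : z ∈ s <;> simp [Set.indicator, hz]
  · exact Measurable.lintegral_prod_right'
      (f := fun p : ℝ × ℝ => s.indicator (fun _ => (1:ℝ≥0∞)) p.2 * gaussianPDF 0 v₂ (p.2 - p.1))
      (((measurable_const.indicator hs).comp measurable_snd).mul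
        (hgm.comp (measurable_snd.sub measurable_fst)))

lemma gaussianReal_eq_map_const_add (m : ℝ) (v : ℝ≥0) :
    gaussianReal m v = (gaussianReal 0 v).map (fun x => m + x) := by
  rw [gaussianReal_map_const_add]; simp

lemma gaussianReal_conv (m₁ m₂ : ℝ) (v₁ v₂ : ℝ≥0) :
    ((gaussianReal m₁ v₁).prod (gaussianReal m₂ v₂)).map (fun p : ℝ × ℝ => p.1 + p.2)
      = gaussianReal (m₁ + m₂) (v₁ + v₂) := by
  rw [gaussianReal_eq_map_const_add m₁ v₁, gaussianReal_eq_map_const_add m₂ v₂,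
    Measure.map_prod_map _ _ (by fun_prop) (by fun_prop),
    Measure.map_map (by fun_prop) (by fun_prop)]
  have : ((fun p : ℝ × ℝ => p.1 + p.2) ∘ Prod.map (fun x => m₁ + x) fun x => m₂ + x)
      = (fun x => (m₁ + m₂) + x) ∘ (fun p : ℝ × ℝ => p.1 + p.2) := by
    ext p; simp [Prod.map]; ring
  rw [this, ← Measure.map_map (by fun_prop) (by fun_prop), gaussianReal_conv_zero,
    ← gaussianReal_eq_map_const_add]

/-- `map` commutes with `bind`. -/
lemma Measure.map_bind' {α β γ : Type*} [MeasurableSpace α] [MeasurableSpace β]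
    [MeasurableSpace γ] (μ : Measure α) {κ : α → Measure β} {f : β → γ}
    (hκ : Measurable κ) (hf : Measurable f) :
    (μ.bind κ).map f = μ.bind fun a => (κ a).map f := by
  rw [← Measure.bind_dirac_eq_map _ hf, Measure.bind_bind hκ.aemeasurable (show Measurable (fun x => Measure.dirac (f x)) from Measure.measurable_dirac.comp hf).aemeasurable]
  congr 1 with a
  rw [Measure.bind_dirac_eq_map _ hf]

lemma Measure.bind_map' {α β γ : Type*} [MeasurableSpace α] [MeasurableSpace β]
    [MeasurableSpace γ] (μ : Measure α) {f : α → β} {κ : β → Measure γ}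
    (hf : Measurable f) (hκ : Measurable κ) :
    (μ.map f).bind κ = μ.bind fun a => κ (f a) := by
  rw [← Measure.bind_dirac_eq_map _ hf, Measure.bind_bind (show Measurable (fun x => Measure.dirac (f x)) from Measure.measurable_dirac.comp hf).aemeasurable hκ.aemeasurable]
  congr 1 with a
  rw [Measure.dirac_bind hκ]

/-- measurability of a parametrized pushforward. -/
lemma measurable_map_kernel {α β γ : Type*} [MeasurableSpace α] [MeasurableSpace β]
    [MeasurableSpace γ] (ν : Measure β) [SFinite ν] {g : α → β → γ}
    (hg : Measurable (Function.uncurry g)) :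
    Measurable fun a => ν.map (g a) := by
  rw [Measure.measurable_measure]
  intro s hs
  have h1 : ∀ a, ν.map (g a) s = ν (Prod.mk a ⁻¹' (Function.uncurry g ⁻¹' s)) := by
    intro a
    rw [Measure.map_apply (show Measurable (g a) from hg.comp measurable_prodMk_left) hs]
    rfl
  simp_rw [h1]
  exact measurable_measure_prodMk_left (hg hs)

lemma measurable_gaussianReal (v : ℝ≥0) : Measurable fun m => gaussianReal m v := by
  have : (fun m => gaussianReal m v) = fun m => (gaussianReal 0 v).map (fun x => m + x) := by
    ext1 m; rw [← gaussianReal_eq_map_const_add]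
  rw [this]
  exact measurable_map_kernel _ (by fun_prop)

lemma Measure.bind_gaussianReal (μ : Measure ℝ) [SFinite μ] (v : ℝ≥0) :
    μ.bind (fun u => gaussianReal u v) = (μ.prod (gaussianReal 0 v)).map
      (fun p : ℝ × ℝ => p.1 + p.2) := by
  ext s hs
  rw [Measure.bind_apply hs (_root_.measurable_gaussianReal v).aemeasurable,
    Measure.map_apply (by fun_prop) hs, Measure.prod_apply (hs.preimage (by fun_prop))]
  congr 1 with u
  rw [gaussianReal_eq_map_const_add u v, Measure.map_apply (by fun_prop) hs]
  rfl

lemma gaussianReal_bind_gaussianReal (m : ℝ) (v₁ v₂ : ℝ≥0) :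
    (gaussianReal m v₁).bind (fun u => gaussianReal u v₂) = gaussianReal m (v₁ + v₂) := by
  rw [Measure.bind_gaussianReal, gaussianReal_conv, add_zero]


def nnsq (x : ℝ) : ℝ≥0 := ⟨x ^ 2, sq_nonneg x⟩

lemma gaussianReal_map_const_mul' (c μ : ℝ) (v : ℝ≥0) :
    (gaussianReal μ v).map (fun x => c * x) = gaussianReal (c * μ) (nnsq c * v) :=
  gaussianReal_map_const_mul c

lemma sum_option' {α : Type*} [Fintype α] {M : Type*} [AddCommMonoid M] (f : Option α → M) :
    ∑ o : Option α, f o = f none + ∑ i : α, f (some i) := by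
  rw [univ_option, Finset.sum_insertNone]

lemma piOptionEquivProd_symm_apply {α : Type} (p : (α → ℝ) × ℝ) (o : Option α) :
    (MeasurableEquiv.piOptionEquivProd (fun _ : Option α => ℝ)).symm p o
      = Option.elim o p.2 p.1 := by
  cases o <;>
    simp [MeasurableEquiv.piOptionEquivProd, MeasurableEquiv.trans, MeasurableEquiv.symm,
      MeasurableEquiv.piCongrLeft, MeasurableEquiv.sumPiEquivProdPi, MeasurableEquiv.prodCongr,
      MeasurableEquiv.piUnique, Equiv.piCongrLeft, MeasurableEquiv.refl,
      Equiv.sumPiEquivProdPi, Equiv.piUnique, Equiv.piCongrLeft']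

def PiSumProp (ι : Type) [Fintype ι] : Prop :=
  ∀ (a m : ι → ℝ) (v : ι → ℝ≥0),
    (Measure.pi fun i => gaussianReal (m i) (v i)).map (fun z => ∑ i, a i * z i)
      = gaussianReal (∑ i, a i * m i) (∑ i, nnsq (a i) * v i)

lemma pi_map_weightedSum (ι : Type) [inst : Fintype ι] : PiSumProp ι := by
  refine Fintype.induction_empty_option (P := @PiSumProp) ?_ ?_ ?_ ι
  · intro α β instβ e ih
    letI : Fintype α := Fintype.ofEquiv β e.symm
    intro a m v
    rw [← MeasureTheory.Measure.pi_map_piCongrLeft e (fun i : β => gaussianReal (m i) (v i)),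
      Measure.map_map (by fun_prop) (MeasurableEquiv.measurable _)]
    have h1 : ((fun z : β → ℝ => ∑ i, a i * z i) ∘
        (MeasurableEquiv.piCongrLeft (fun _ => ℝ) e))
        = fun z : α → ℝ => ∑ i, a (e i) * z i := by
      ext z
      simp only [Function.comp_apply]
      rw [← Equiv.sum_comp e (fun i => a i * ((MeasurableEquiv.piCongrLeft (fun _ => ℝ) e) z i))]
      congr 1 with i
      rw [MeasurableEquiv.piCongrLeft_apply_apply]
    rw [h1, ih (fun i => a (e i)) (fun i => m (e i)) (fun i => v (e i)),
      ← Equiv.sum_comp e (fun i => a i * m i),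
      ← Equiv.sum_comp e (fun i => nnsq (a i) * v i)]
  · intro a m v
    have h0 : (fun z : PEmpty → ℝ => ∑ i, a i * z i) = fun _ => (0:ℝ) := by
      ext z; simp
    rw [h0, Measure.map_const]
    simp [gaussianReal_zero_var]
  · intro α instα ih a m v
    rw [← MeasureTheory.Measure.pi_map_piOptionEquivProd
        (fun o : Option α => gaussianReal (m o) (v o)),
      Measure.map_map (by fun_prop) (MeasurableEquiv.measurable _)]
    have h1 : ((fun z : Option α → ℝ => ∑ o, a o * z o) ∘
        (MeasurableEquiv.piOptionEquivProd (fun _ : Option α => ℝ)).symm)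
        = (fun p : ℝ × ℝ => p.1 + p.2) ∘
          (Prod.map (fun z : α → ℝ => ∑ i, a (some i) * z i) (fun x : ℝ => a none * x)) := by
      ext p
      simp only [Function.comp_apply, Prod.map_apply]
      rw [sum_option' (fun o => a o * _)]
      simp only [piOptionEquivProd_symm_apply]
      simp [add_comm]
    rw [h1, ← Measure.map_map (by fun_prop) (by fun_prop),
      ← Measure.map_prod_map _ _ (by fun_prop) (by fun_prop),
      ih (fun i => a (some i)) (fun i => m (some i)) (fun i => v (some i)),
      gaussianReal_map_const_mul', gaussianReal_conv,
      sum_option' (fun o => a o * m o), sum_option' (fun o => nnsq (a o) * v o),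
      add_comm (a none * m none), add_comm (nnsq (a none) * v none)]



def pairOf {p : ℕ} (d : PairIdx p) (j k : Fin p) : PairIdx p :=
  if h : j < k then ⟨(j, k), h⟩ else if h' : k < j then ⟨(k, j), h'⟩ else d

lemma symExt_eq_pairOf {p : ℕ} (d : PairIdx p) (z : PairIdx p → ℝ) {j k : Fin p} (h : j ≠ k) :
    symExt z j k = z (pairOf d j k) := by
  rcases lt_or_gt_of_ne h with h1 | h1
  · simp only [symExt, pairOf]; rw [dif_pos h1, dif_pos h1]
  · simp only [symExt, pairOf]; rw [dif_neg (not_lt_of_gt h1), dif_neg (not_lt_of_gt h1), dif_pos h1, dif_pos h1]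

lemma measurable_symExt {p : ℕ} (j k : Fin p) :
    Measurable fun z : PairIdx p → ℝ => symExt z j k := by
  unfold symExt
  by_cases h : j < k
  · simp only [dif_pos h]; exact measurable_pi_apply _
  · simp only [dif_neg h]
    by_cases h' : k < j
    · simp only [dif_pos h']; exact measurable_pi_apply _
    · simp only [dif_neg h']; exact measurable_const

lemma sum_pairIdx {p : ℕ} (j : Fin p) (d : PairIdx p) (G : PairIdx p → ℝ)
    (hG : ∀ q : PairIdx p, q.1.1 ≠ j → q.1.2 ≠ j → G q = 0) :
    ∑ q : PairIdx p, G q = ∑ k ∈ Finset.univ.erase j, G (pairOf d j k) := by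
  classical
  have hsub : ∑ q : PairIdx p, G q
      = ∑ q ∈ Finset.univ.filter (fun q : PairIdx p => q.1.1 = j ∨ q.1.2 = j), G q := by
    refine (Finset.sum_subset (Finset.filter_subset _ _) ?_).symm
    intro q _ hq
    simp only [Finset.mem_filter, Finset.mem_univ, true_and, not_or] at hq
    exact hG q hq.1 hq.2
  rw [hsub]
  refine Finset.sum_bij' (i := fun q _ => if q.1.1 = j then q.1.2 else q.1.1)
    (j := fun k _ => pairOf d j k) ?_ ?_ ?_ ?_ ?_
  · intro q hq
    simp only [Finset.mem_filter, Finset.mem_univ, true_and] at hq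
    simp only [Finset.mem_erase, Finset.mem_univ, and_true]
    rcases hq with h1 | h2
    · simp only [if_pos h1]
      intro hcon
      exact absurd q.2 (by rw [h1, hcon]; exact lt_irrefl j)
    · by_cases h1 : q.1.1 = j
      · simp only [if_pos h1]
        intro hcon
        exact absurd q.2 (by rw [h1, hcon]; exact lt_irrefl j)
      · simp only [if_neg h1]
        intro hcon
        exact absurd q.2 (by rw [hcon, h2]; exact lt_irrefl j)
  · intro k hk
    simp only [Finset.mem_erase, Finset.mem_univ, and_true] at hk
    simp only [Finset.mem_filter, Finset.mem_univ, true_and]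
    rcases lt_or_gt_of_ne (Ne.symm hk) with h1 | h1
    · left; simp only [pairOf]; rw [dif_pos h1]
    · right; simp only [pairOf]; rw [dif_neg (not_lt_of_gt h1), dif_pos h1]
  · intro q hq
    simp only [Finset.mem_filter, Finset.mem_univ, true_and] at hq
    by_cases h1 : q.1.1 = j
    · simp only [if_pos h1]
      have h2 : j < q.1.2 := h1 ▸ q.2
      simp only [pairOf]; rw [dif_pos h2]
      exact Subtype.ext (Prod.ext h1.symm rfl)
    · simp only [if_neg h1]
      have h2 : q.1.2 = j := hq.resolve_left h1
      have h3 : q.1.1 < j := h2 ▸ q.2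
      simp only [pairOf]; rw [dif_neg (not_lt_of_gt h3), dif_pos h3]
      exact Subtype.ext (Prod.ext rfl h2.symm)
  · intro k hk
    simp only [Finset.mem_erase, Finset.mem_univ, and_true] at hk
    rcases lt_or_gt_of_ne (Ne.symm hk) with h1 | h1
    · simp [pairOf, h1]
    · simp [pairOf, not_lt_of_gt h1, h1, hk]
  · intro q hq
    simp only [Finset.mem_filter, Finset.mem_univ, true_and] at hq
    by_cases h1 : q.1.1 = j
    · simp only [if_pos h1]
      have h2 : j < q.1.2 := h1 ▸ q.2
      simp only [pairOf]; rw [dif_pos h2]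
      congr 1
      exact Subtype.ext (Prod.ext h1 rfl)
    · simp only [if_neg h1]
      have h2 : q.1.2 = j := hq.resolve_left h1
      have h3 : q.1.1 < j := h2 ▸ q.2
      simp only [pairOf]; rw [dif_neg (not_lt_of_gt h3), dif_pos h3]
      congr 1
      exact Subtype.ext (Prod.ext rfl h2)

lemma bind_bind_map_fst_snd {α β : Type*} [MeasurableSpace α] [MeasurableSpace β]
    (μ : Measure ℝ) (P : ℝ → Measure α) (Q : α → Measure β) (f : α → ℝ)
    (hP : Measurable fun w => (P w).map (Prod.mk w))
    (hQprob : ∀ z, IsProbabilityMeasure (Q z))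
    (hQ : Measurable fun (wz : ℝ × α) => (Q wz.2).map (fun y => (wz.1, wz.2, y)))
    (hf : Measurable f) :
    ((μ.bind fun w => (P w).bind fun z => (Q z).map fun y => (w, z, y)).map
        (fun x : ℝ × α × β => f x.2.1))
      = μ.bind fun w => (P w).map f := by
  have hκ : Measurable fun w => (P w).bind fun z => (Q z).map fun y => (w, z, y) := by
    have h1 : ∀ w, ((P w).map (Prod.mk w)).bind
        (fun wz : ℝ × α => (Q wz.2).map (fun y => (wz.1, wz.2, y)))
        = (P w).bind fun z => (Q z).map fun y => (w, z, y) := fun w =>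
      Measure.bind_map' _ measurable_prodMk_left hQ
    simp_rw [← h1]
    exact (Measure.measurable_bind' hQ).comp hP
  have hF : Measurable fun x : ℝ × α × β => f x.2.1 :=
    hf.comp (measurable_fst.comp measurable_snd)
  rw [Measure.map_bind' μ hκ hF]
  congr 1
  funext w
  rw [Measure.map_bind' (P w)
    (show Measurable fun z => (Q z).map fun y => (w, z, y) from hQ.comp measurable_prodMk_left)
    hF]
  have h2 : ∀ z, (((Q z).map fun y => (w, z, y)).map fun x : ℝ × α × β => f x.2.1)
      = Measure.dirac (f z) := by
    intro z
    rw [Measure.map_map hF (show Measurable fun y : β => ((w, z, y) : ℝ × α × β) by fun_prop)]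
    have : ((fun x : ℝ × α × β => f x.2.1) ∘ fun y => (w, z, y)) = fun _ => f z := rfl
    rw [this, Measure.map_const, measure_univ, one_smul]
  simp_rw [h2]
  rw [Measure.bind_dirac_eq_map _ hf]

/-- In the three-level normal hierarchical model, the marginal law of the weighted sum
`∑_{k≠j} c_{jk} Z_{jk}` equals the Gaussian measure with mean `m0 · ∑_{k≠j} c_{jk}` and
variance `(∑_{k≠j} c_{jk})(c0 + ∑_{k≠j} c_{jk})/c0`. -/
theorem normalHier_marginal_weightedSum (p : ℕ) (hp : 2 ≤ p) (m0 c0 : ℝ) (hc0 : 0 < c0)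
    (c : Fin p → Fin p → ℝ) (hc : ∀ j k, j ≠ k → 0 < c j k)
    (hsym : ∀ j k, c k j = c j k) (j : Fin p) :
    (normalHierJoint p m0 c0 c).map
        (fun x => ∑ k ∈ Finset.univ.erase j, c j k * symExt x.2.1 j k) =
      gaussianReal (m0 * ∑ k ∈ Finset.univ.erase j, c j k)
        ((∑ k ∈ Finset.univ.erase j, c j k) *
            (c0 + ∑ k ∈ Finset.univ.erase j, c j k) / c0).toNNReal := by
  classical
  have hp1 : 1 < p := hp
  set A : ℝ := ∑ k ∈ Finset.univ.erase j, c j k with hA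
  let d : PairIdx p := ⟨(⟨0, by omega⟩, ⟨1, by omega⟩), Fin.mk_lt_mk.mpr one_pos⟩
  let a : PairIdx p → ℝ := fun q =>
    if q.1.1 = j then c j q.1.2 else if q.1.2 = j then c j q.1.1 else 0
  let vz : PairIdx p → ℝ≥0 := fun q => (1 / c q.1.1 q.1.2).toNNReal
  let f : (PairIdx p → ℝ) → ℝ := fun z => ∑ k ∈ Finset.univ.erase j, c j k * symExt z j k
  have hcq : ∀ q : PairIdx p, 0 < c q.1.1 q.1.2 := fun q => hc _ _ (ne_of_lt q.2)
  have hA_pos : 0 < A := by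
    rw [hA]
    apply Finset.sum_pos
    · intro k hk
      exact hc j k (Ne.symm (Finset.mem_erase.mp hk).1)
    · refine ⟨if j = ⟨0, by omega⟩ then ⟨1, by omega⟩ else ⟨0, by omega⟩, ?_⟩
      simp only [Finset.mem_erase, Finset.mem_univ, and_true]
      split_ifs with h
      · rw [h]
        intro hcon
        exact absurd (congrArg Fin.val hcon) (by simp)
      · exact fun hcon => h hcon.symm
  have hpair : ∀ k ∈ Finset.univ.erase j,
      a (pairOf d j k) = c j k ∧ c (pairOf d j k).1.1 (pairOf d j k).1.2 = c j k := by
    intro k hk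
    have hkj : k ≠ j := (Finset.mem_erase.mp hk).1
    rcases lt_or_gt_of_ne (Ne.symm hkj) with h1 | h1
    · have e : pairOf d j k = ⟨(j, k), h1⟩ := by simp only [pairOf]; rw [dif_pos h1]
      rw [e]
      exact ⟨by simp [a], rfl⟩
    · have e : pairOf d j k = ⟨(k, j), h1⟩ := by
        simp only [pairOf]; rw [dif_neg (not_lt_of_gt h1), dif_pos h1]
      rw [e]
      refine ⟨?_, hsym j k⟩
      simp [a, hkj]
  have ha_zero : ∀ q : PairIdx p, q.1.1 ≠ j → q.1.2 ≠ j → a q = 0 := by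
    intro q h1 h2
    simp only [a]
    rw [if_neg h1, if_neg h2]
  have hsum_az : ∀ z : PairIdx p → ℝ, (∑ q : PairIdx p, a q * z q) = f z := by
    intro z
    rw [sum_pairIdx j d (fun q => a q * z q)
      (fun q h1 h2 => by show a q * z q = 0; rw [ha_zero q h1 h2, zero_mul])]
    refine Finset.sum_congr rfl (fun k hk => ?_)
    rw [(hpair k hk).1,
      ← symExt_eq_pairOf d z (Ne.symm (Finset.mem_erase.mp hk).1)]
  have hsum_a : (∑ q : PairIdx p, a q) = A := by
    rw [sum_pairIdx j d a ha_zero, hA]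
    exact Finset.sum_congr rfl (fun k hk => (hpair k hk).1)
  have hsum_var : (∑ q : PairIdx p, nnsq (a q) * vz q) = A.toNNReal := by
    apply NNReal.coe_injective
    rw [NNReal.coe_sum, Real.coe_toNNReal _ hA_pos.le]
    have hterm : ∀ q : PairIdx p, ((nnsq (a q) * vz q : ℝ≥0) : ℝ)
        = a q ^ 2 * (1 / c q.1.1 q.1.2) := by
      intro q
      show (a q ^ 2) * ((1 / c q.1.1 q.1.2).toNNReal : ℝ) = a q ^ 2 * (1 / c q.1.1 q.1.2)
      rw [Real.coe_toNNReal _ (one_div_nonneg.mpr (hcq q).le)]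
    rw [Finset.sum_congr rfl (fun q _ => hterm q)]
    rw [sum_pairIdx j d (fun q => a q ^ 2 * (1 / c q.1.1 q.1.2))
      (fun q h1 h2 => by show a q ^ 2 * (1 / c q.1.1 q.1.2) = 0; rw [ha_zero q h1 h2]; ring)]
    rw [hA]
    refine Finset.sum_congr rfl (fun k hk => ?_)
    rw [(hpair k hk).1, (hpair k hk).2]
    have : c j k ≠ 0 := (hc j k (Ne.symm (Finset.mem_erase.mp hk).1)).ne'
    field_simp
  -- measurability of the kernels
  have hmean : ∀ i : Fin p, Measurable fun z : PairIdx p → ℝ =>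
      (c0 * m0 + ∑ k ∈ Finset.univ.erase i, c i k * symExt z i k) /
        (c0 + ∑ k ∈ Finset.univ.erase i, c i k) := fun i =>
    (measurable_const.add
      (Finset.measurable_sum _ (fun k _ => (measurable_symExt i k).const_mul _))).div_const _
  have hfmeas : Measurable f :=
    Finset.measurable_sum _ (fun k _ => (measurable_symExt j k).const_mul _)
  have hshiftZ : ∀ w : ℝ,
      (Measure.pi fun q : PairIdx p => gaussianReal w ((1 / c q.1.1 q.1.2).toNNReal))
        = (Measure.pi fun q : PairIdx p =>
            gaussianReal 0 ((1 / c q.1.1 q.1.2).toNNReal)).map (fun z q => w + z q) := by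
    intro w
    exact (measurePreserving_pi _ _ (fun q =>
      ⟨measurable_const_add w, by rw [gaussianReal_map_const_add, zero_add]⟩)).map_eq.symm
  have hP : Measurable fun w : ℝ =>
      ((Measure.pi fun q : PairIdx p =>
        gaussianReal w ((1 / c q.1.1 q.1.2).toNNReal)).map (Prod.mk w)) := by
    have h2 : ∀ w : ℝ, ((Measure.pi fun q : PairIdx p =>
        gaussianReal w ((1 / c q.1.1 q.1.2).toNNReal)).map (Prod.mk w))
        = (Measure.pi fun q : PairIdx p =>
            gaussianReal 0 ((1 / c q.1.1 q.1.2).toNNReal)).map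
              (fun z => (w, fun q => w + z q)) := by
      intro w
      rw [hshiftZ w, Measure.map_map measurable_prodMk_left (show Measurable (fun (z : PairIdx p → ℝ) (q : PairIdx p) => w + z q) by fun_prop)]
      rfl
    simp_rw [h2]
    exact measurable_map_kernel _
      (g := fun (w : ℝ) (z : PairIdx p → ℝ) => (w, fun q => w + z q))
      (measurable_fst.prodMk (measurable_pi_lambda _ fun q =>
        measurable_fst.add ((measurable_pi_apply q).comp measurable_snd)))
  have hshiftY : ∀ z : PairIdx p → ℝ,
      (Measure.pi fun i : Fin p => gaussianReal
          ((c0 * m0 + ∑ k ∈ Finset.univ.erase i, c i k * symExt z i k) /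
            (c0 + ∑ k ∈ Finset.univ.erase i, c i k))
          ((1 / (c0 + ∑ k ∈ Finset.univ.erase i, c i k)).toNNReal))
        = (Measure.pi fun i : Fin p =>
            gaussianReal 0 ((1 / (c0 + ∑ k ∈ Finset.univ.erase i, c i k)).toNNReal)).map
          (fun y i => (c0 * m0 + ∑ k ∈ Finset.univ.erase i, c i k * symExt z i k) /
            (c0 + ∑ k ∈ Finset.univ.erase i, c i k) + y i) := by
    intro z
    exact (measurePreserving_pi _ _ (fun i =>
      ⟨measurable_const_add _, by rw [gaussianReal_map_const_add, zero_add]⟩)).map_eq.symm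
  have hQ : Measurable fun wz : ℝ × (PairIdx p → ℝ) =>
      ((Measure.pi fun i : Fin p => gaussianReal
          ((c0 * m0 + ∑ k ∈ Finset.univ.erase i, c i k * symExt wz.2 i k) /
            (c0 + ∑ k ∈ Finset.univ.erase i, c i k))
          ((1 / (c0 + ∑ k ∈ Finset.univ.erase i, c i k)).toNNReal)).map
        (fun y => (wz.1, wz.2, y))) := by
    have h2 : ∀ wz : ℝ × (PairIdx p → ℝ),
        ((Measure.pi fun i : Fin p => gaussianReal
            ((c0 * m0 + ∑ k ∈ Finset.univ.erase i, c i k * symExt wz.2 i k) /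
              (c0 + ∑ k ∈ Finset.univ.erase i, c i k))
            ((1 / (c0 + ∑ k ∈ Finset.univ.erase i, c i k)).toNNReal)).map
          (fun y => (wz.1, wz.2, y)))
        = (Measure.pi fun i : Fin p =>
            gaussianReal 0 ((1 / (c0 + ∑ k ∈ Finset.univ.erase i, c i k)).toNNReal)).map
          (fun y => (wz.1, wz.2, fun i =>
            (c0 * m0 + ∑ k ∈ Finset.univ.erase i, c i k * symExt wz.2 i k) /
              (c0 + ∑ k ∈ Finset.univ.erase i, c i k) + y i)) := by
      intro wz
      rw [hshiftY wz.2, Measure.map_map (show Measurable (fun y : Fin p → ℝ => (wz.1, wz.2, y)) by fun_prop) (by fun_prop)]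
      rfl
    simp_rw [h2]
    exact measurable_map_kernel _
      (g := fun (wz : ℝ × (PairIdx p → ℝ)) (y : Fin p → ℝ) => (wz.1, wz.2, fun i =>
        (c0 * m0 + ∑ k ∈ Finset.univ.erase i, c i k * symExt wz.2 i k) /
          (c0 + ∑ k ∈ Finset.univ.erase i, c i k) + y i))
      (measurable_fst.fst.prodMk (measurable_fst.snd.prodMk
        (measurable_pi_lambda _ fun i =>
          ((hmean i).comp measurable_fst.snd).add ((measurable_pi_apply i).comp measurable_snd))))
  -- main computation
  have hmain := bind_bind_map_fst_snd
    (gaussianReal m0 (1 / c0).toNNReal)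
    (fun w => Measure.pi fun q : PairIdx p => gaussianReal w ((1 / c q.1.1 q.1.2).toNNReal))
    (fun z => Measure.pi fun i : Fin p => gaussianReal
        ((c0 * m0 + ∑ k ∈ Finset.univ.erase i, c i k * symExt z i k) /
          (c0 + ∑ k ∈ Finset.univ.erase i, c i k))
        ((1 / (c0 + ∑ k ∈ Finset.univ.erase i, c i k)).toNNReal))
    f hP (fun z => inferInstance) hQ hfmeas
  refine hmain.trans ?_
  have hPf : ∀ w : ℝ,
      (Measure.pi fun q : PairIdx p =>
        gaussianReal w ((1 / c q.1.1 q.1.2).toNNReal)).map f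
      = gaussianReal (A * w) A.toNNReal := by
    intro w
    have h1 : f = fun z : PairIdx p → ℝ => ∑ q : PairIdx p, a q * z q := by
      funext z
      exact (hsum_az z).symm
    rw [h1, pi_map_weightedSum (PairIdx p) a (fun _ => w) vz,
      show (∑ q : PairIdx p, a q * w) = A * w by rw [← Finset.sum_mul, hsum_a], hsum_var]
  calc (gaussianReal m0 (1 / c0).toNNReal).bind (fun w =>
        (Measure.pi fun q : PairIdx p =>
          gaussianReal w ((1 / c q.1.1 q.1.2).toNNReal)).map f)
      = (gaussianReal m0 (1 / c0).toNNReal).bind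
          (fun w => gaussianReal (A * w) A.toNNReal) := by
        simp_rw [hPf]
    _ = ((gaussianReal m0 (1 / c0).toNNReal).map (fun w => A * w)).bind
          (fun u => gaussianReal u A.toNNReal) :=
        (Measure.bind_map' _ (measurable_const_mul A) (_root_.measurable_gaussianReal _)).symm
    _ = (gaussianReal (A * m0) (nnsq A * (1 / c0).toNNReal)).bind
          (fun u => gaussianReal u A.toNNReal) := by
        rw [gaussianReal_map_const_mul']
    _ = gaussianReal (A * m0) (nnsq A * (1 / c0).toNNReal + A.toNNReal) :=
        gaussianReal_bind_gaussianReal _ _ _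
    _ = gaussianReal (m0 * A) ((A * (c0 + A) / c0).toNNReal) := by
        rw [mul_comm A m0]
        congr 1
        apply NNReal.coe_injective
        rw [NNReal.coe_add, NNReal.coe_mul, Real.coe_toNNReal _ (by positivity : (0:ℝ) ≤ 1 / c0),
          Real.coe_toNNReal _ hA_pos.le,
          Real.coe_toNNReal _ (by positivity : (0:ℝ) ≤ A * (c0 + A) / c0)]
        show A ^ 2 * (1 / c0) + A = A * (c0 + A) / c0
        field_simp
        ring
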